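/- If there exist real numbers χ₁,...,χ_m ∈ (0,1) such that for every i, Pr(E_i) ≤ χ_i · ∏_{j ∈ N_i} (1 - χ_j), where N_i is the neighborhood of E_i in the dependency graph (with i ∈ N_i), then Pr(⋂_{i=1}^m E_i^c) > 0. -/

import Mathlib

open MeasureTheory ProbabilityTheory

/-- **Asymmetric Lovász Local Lemma** (variable setting).
`X i : Ω → D i` are mutually independent random variables, each event `E j` depends
only on the variables in its scope `e j` (it is measurable w.r.t. the σ-algebra
generated by those variables), the dependency graph puts an edge between `i` and `j`
iff their scopes intersect, and `N i` is the corresponding (closed) neighborhood.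
If there are `χ i ∈ (0,1)` with `Pr(E i) ≤ χ i * ∏_{j ∈ N i} (1 - χ j)` for all `i`,
then with positive probability none of the events occurs. -/
theorem asymmetric_LLL
    {Ω : Type*} [MeasurableSpace Ω] (μ : Measure Ω) [IsProbabilityMeasure μ]
    {n m : ℕ} (D : Fin n → Type*) [∀ i, MeasurableSpace (D i)]
    (X : ∀ i, Ω → D i)
    (hindep : iIndepFun X μ)
    (hmeas : ∀ i, Measurable (X i))
    (e : Fin m → Finset (Fin n)) (E : Fin m → Set Ω)
    (hscope : ∀ j, MeasurableSet[MeasurableSpace.comap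
        (fun ω => fun i : e j => X i ω) inferInstance] (E j))
    (N : Fin m → Finset (Fin m))
    (hN : ∀ i j, j ∈ N i ↔ ¬ Disjoint (e i) (e j))
    (χ : Fin m → ℝ) (hχ : ∀ i, χ i ∈ Set.Ioo (0 : ℝ) 1)
    (hbound : ∀ i, (μ (E i)).toReal ≤ χ i * ∏ j ∈ N i, (1 - χ j)) :
    0 < μ (⋂ i, (E i)ᶜ) := by
  classical
  -- the σ-algebra generated by a finite set of the variables
  set F : Finset (Fin n) → MeasurableSpace Ω :=
    fun s => MeasurableSpace.comap (fun ω => fun i : s => X i ω) inferInstance with hF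
  -- monotonicity of F
  have hmono : ∀ s t : Finset (Fin n), s ⊆ t → F s ≤ F t := by
    intro s t hst
    have hr : Measurable (fun (f : ∀ i : t, D i) => fun (i : s) => f ⟨i.1, hst i.2⟩) :=
      measurable_pi_lambda _ fun i => measurable_pi_apply _
    intro u hu
    rw [hF] at hu ⊢
    rw [MeasurableSpace.measurableSet_comap] at hu ⊢
    obtain ⟨u', hu', rfl⟩ := hu
    exact ⟨(fun (f : ∀ i : t, D i) => fun (i : s) => f ⟨i.1, hst i.2⟩) ⁻¹' u',
      hr hu', rfl⟩
  -- F s is coarser than the ambient σ-algebra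
  have hle : ∀ s : Finset (Fin n), F s ≤ ‹MeasurableSpace Ω› := by
    intro s
    exact measurable_iff_comap_le.mp (measurable_pi_lambda _ fun i => hmeas i)
  have hEin : ∀ j (s : Finset (Fin n)), e j ⊆ s → MeasurableSet[F s] (E j) :=
    fun j s hs => hmono (e j) s hs _ (hscope j)
  have hEmeas : ∀ j, MeasurableSet (E j) := fun j => hle (e j) _ (hscope j)
  -- the "no bad event in S" sets
  set A : Finset (Fin m) → Set Ω := fun S => ⋂ j ∈ S, (E j)ᶜ with hA
  have hAmeas : ∀ S, MeasurableSet (A S) := by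
    intro S
    exact MeasurableSet.iInter fun j => MeasurableSet.iInter fun _ => (hEmeas j).compl
  have hAin : ∀ S : Finset (Fin m), MeasurableSet[F (S.biUnion e)] (A S) := by
    intro S
    exact MeasurableSet.iInter fun j => MeasurableSet.iInter fun hj =>
      (hEin j _ (Finset.subset_biUnion_of_mem e hj)).compl
  have hAanti : ∀ S T : Finset (Fin m), T ⊆ S → A S ⊆ A T := by
    intro S T hTS ω hω
    simp only [hA, Set.mem_iInter] at hω ⊢
    exact fun j hj => hω j (hTS hj)
  -- independence of events over disjoint variable sets
  have hind : ∀ s t : Finset (Fin n), Disjoint s t → ∀ u v : Set Ω,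
      MeasurableSet[F s] u → MeasurableSet[F t] v → μ (u ∩ v) = μ u * μ v := by
    intro s t hst u v hu hv
    obtain ⟨u', hu', rfl⟩ := hu
    obtain ⟨v', hv', rfl⟩ := hv
    exact (hindep.indepFun_finset s t hst hmeas).measure_inter_preimage_eq_mul _ _ hu' hv'
  have hχ0 : ∀ j, (0:ℝ) ≤ 1 - χ j := fun j => by linarith [(hχ j).2]
  have hχ1 : ∀ j, 1 - χ j ≤ (1:ℝ) := fun j => by linarith [(hχ j).1]
  -- the chain lemma
  have chain : ∀ S : Finset (Fin m),
      (∀ T, T ⊂ S → ∀ i, (μ (E i ∩ A T)).toReal ≤ χ i * (μ (A T)).toReal) →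
      ∀ (k : ℕ) (T : Finset (Fin m)), T ⊆ S → (S \ T).card = k →
        (∏ j ∈ S \ T, (1 - χ j)) * (μ (A T)).toReal ≤ (μ (A S)).toReal := by
    intro S hIH k
    induction k with
    | zero =>
      intro T hTS hcard
      have hempty : S \ T = ∅ := Finset.card_eq_zero.mp hcard
      have hTS' : T = S := by
        apply Finset.Subset.antisymm hTS
        intro x hx
        by_contra hxT
        have : x ∈ S \ T := Finset.mem_sdiff.mpr ⟨hx, hxT⟩
        simp [hempty] at this
      rw [hempty, hTS', Finset.prod_empty, one_mul]
    | succ k ih =>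
      intro T hTS hcard
      have hne : (S \ T).Nonempty := by
        rw [← Finset.card_pos, hcard]; omega
      obtain ⟨j, hj⟩ := hne
      have hjS : j ∈ S := (Finset.mem_sdiff.mp hj).1
      have hjT : j ∉ T := (Finset.mem_sdiff.mp hj).2
      set T' := insert j T with hT'
      have hT'S : T' ⊆ S := Finset.insert_subset hjS hTS
      have hSdT' : S \ T' = (S \ T).erase j := by
        rw [hT', Finset.sdiff_insert]
      have hcard' : (S \ T').card = k := by
        rw [hSdT', Finset.card_erase_of_mem hj, hcard]
        omega
      have hstep := ih T' hT'S hcard'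
      have hAT' : A T' = (E j)ᶜ ∩ A T := by
        rw [hA]; simp only [hT']
        exact Finset.set_biInter_insert j T fun x => (E x)ᶜ
      have hsplit : (μ (A T)).toReal
          = (μ (E j ∩ A T)).toReal + (μ (A T')).toReal := by
        have h0 : μ (A T ∩ E j) + μ (A T \ E j) = μ (A T) :=
          measure_inter_add_diff (A T) (hEmeas j)
        have h1 : A T ∩ E j = E j ∩ A T := Set.inter_comm _ _
        have h2 : A T \ E j = A T' := by
          rw [hAT', Set.diff_eq, Set.inter_comm]
        rw [h1, h2] at h0
        rw [← h0, ENNReal.toReal_add (measure_ne_top μ _) (measure_ne_top μ _)]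
      have hTsub : T ⊂ S := Finset.ssubset_iff_of_subset hTS |>.mpr ⟨j, hjS, hjT⟩
      have hkey := hIH T hTsub j
      have h1 : (1 - χ j) * (μ (A T)).toReal ≤ (μ (A T')).toReal := by
        have hr : (1 - χ j) * (μ (A T)).toReal
            = (μ (A T)).toReal - χ j * (μ (A T)).toReal := by ring
        rw [hr]
        linarith [hkey, hsplit]
      have hprod : (∏ x ∈ S \ T, (1 - χ x))
          = (1 - χ j) * ∏ x ∈ S \ T', (1 - χ x) := by
        rw [hSdT']
        exact (Finset.mul_prod_erase (S \ T) (fun x => 1 - χ x) hj).symm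
      have hnn : (0:ℝ) ≤ ∏ x ∈ S \ T', (1 - χ x) :=
        Finset.prod_nonneg fun x _ => hχ0 x
      calc (∏ j ∈ S \ T, (1 - χ j)) * (μ (A T)).toReal
          = (∏ x ∈ S \ T', (1 - χ x)) * ((1 - χ j) * (μ (A T)).toReal) := by
            rw [hprod]; ring
        _ ≤ (∏ x ∈ S \ T', (1 - χ x)) * (μ (A T')).toReal :=
            mul_le_mul_of_nonneg_left h1 hnn
        _ ≤ (μ (A S)).toReal := hstep
  -- the key conditional bound, by strong induction
  have key : ∀ S : Finset (Fin m), ∀ i,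
      (μ (E i ∩ A S)).toReal ≤ χ i * (μ (A S)).toReal := by
    intro S
    induction S using Finset.strongInduction with
    | _ S IH =>
      intro i
      set S2 := S \ N i with hS2
      have hS2S : S2 ⊆ S := Finset.sdiff_subset
      have hstepA : μ (E i ∩ A S) ≤ μ (E i ∩ A S2) :=
        measure_mono (Set.inter_subset_inter_right _ (hAanti S S2 hS2S))
      have hdisj : Disjoint (e i) (S2.biUnion e) := by
        rw [Finset.disjoint_biUnion_right]
        intro j hj
        have hjN : j ∉ N i := (Finset.mem_sdiff.mp hj).2
        exact not_not.mp (mt (hN i j).mpr hjN)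
      have hB : μ (E i ∩ A S2) = μ (E i) * μ (A S2) :=
        hind (e i) (S2.biUnion e) hdisj _ _ (hscope i) (hAin S2)
      have hBr : (μ (E i ∩ A S2)).toReal = (μ (E i)).toReal * (μ (A S2)).toReal := by
        rw [hB, ENNReal.toReal_mul]
      have hchain := chain S (fun T hT => IH T hT) (S \ S2).card S2 hS2S rfl
      have hSdS2 : S \ S2 = S ∩ N i := Finset.sdiff_sdiff_self_left S (N i)
      rw [hSdS2] at hchain
      -- product over N i is at most product over S ∩ N i
      have hsub : S ∩ N i ⊆ N i := Finset.inter_subset_right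
      have hprodle : (∏ j ∈ N i, (1 - χ j)) ≤ ∏ j ∈ S ∩ N i, (1 - χ j) := by
        rw [← Finset.prod_sdiff hsub]
        have hd1 : (∏ j ∈ N i \ (S ∩ N i), (1 - χ j)) ≤ 1 :=
          Finset.prod_le_one (fun x _ => hχ0 x) (fun x _ => hχ1 x)
        have hnn : (0:ℝ) ≤ ∏ j ∈ S ∩ N i, (1 - χ j) :=
          Finset.prod_nonneg fun x _ => hχ0 x
        calc (∏ j ∈ N i \ (S ∩ N i), (1 - χ j)) * ∏ j ∈ S ∩ N i, (1 - χ j)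
            ≤ 1 * ∏ j ∈ S ∩ N i, (1 - χ j) := mul_le_mul_of_nonneg_right hd1 hnn
          _ = ∏ j ∈ S ∩ N i, (1 - χ j) := one_mul _
      have hχipos : (0:ℝ) < χ i := (hχ i).1
      have hAS2nn : (0:ℝ) ≤ (μ (A S2)).toReal := ENNReal.toReal_nonneg
      calc (μ (E i ∩ A S)).toReal
          ≤ (μ (E i ∩ A S2)).toReal := ENNReal.toReal_mono (measure_ne_top μ _) hstepA
        _ = (μ (E i)).toReal * (μ (A S2)).toReal := hBr
        _ ≤ (χ i * ∏ j ∈ N i, (1 - χ j)) * (μ (A S2)).toReal :=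
            mul_le_mul_of_nonneg_right (hbound i) hAS2nn
        _ ≤ (χ i * ∏ j ∈ S ∩ N i, (1 - χ j)) * (μ (A S2)).toReal := by
            apply mul_le_mul_of_nonneg_right _ hAS2nn
            exact mul_le_mul_of_nonneg_left hprodle (le_of_lt hχipos)
        _ = χ i * ((∏ j ∈ S ∩ N i, (1 - χ j)) * (μ (A S2)).toReal) := by ring
        _ ≤ χ i * (μ (A S)).toReal :=
            mul_le_mul_of_nonneg_left hchain (le_of_lt hχipos)
  -- conclude
  have hAempty : A ∅ = Set.univ := by simp [hA]
  have hfin := chain Finset.univ (fun T _ i => key T i) (Finset.univ \ ∅).card ∅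
    (Finset.empty_subset _) rfl
  rw [hAempty] at hfin
  simp only [Finset.sdiff_empty, measure_univ, ENNReal.toReal_one, mul_one] at hfin
  have hppos : (0:ℝ) < ∏ j ∈ (Finset.univ : Finset (Fin m)), (1 - χ j) :=
    Finset.prod_pos fun j _ => by linarith [(hχ j).2]
  have hpos : (0:ℝ) < (μ (A Finset.univ)).toReal := lt_of_lt_of_le hppos hfin
  have hiter : ⋂ i, (E i)ᶜ = A Finset.univ := by
    simp [hA]
  rw [hiter, pos_iff_ne_zero]
  intro h
  rw [h] at hpos
  simp at hpos
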